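/- arXiv:2310.12993 — 11 statements merged into one kernel-verified Lean document; each statement's English description precedes it below -/
import Mathlib

section
/- For every real number x in the interval [0, 1/2], the inequality (1 + 4x²)·cos(πx) ≥ 1 − 4x² holds, with equality if and only if x = 0 or x = 1/2. -/
open Real

lemma arctan_strictConcaveOn : StrictConcaveOn ℝ (Set.Icc (0:ℝ) 1) Real.arctan := by
  apply strictConcaveOn_of_deriv2_neg (convex_Icc _ _)
    Real.continuous_arctan.continuousOn
  intro x hx
  rw [interior_Icc] at hx
  have h1 : deriv Real.arctan = fun y : ℝ => 1 / (1 + y ^ 2) := Real.deriv_arctan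
  show deriv (deriv Real.arctan) x < 0
  rw [h1]
  have hne : (1 + x ^ 2) ≠ 0 := by positivity
  have hd : HasDerivAt (fun y : ℝ => 1 + y ^ 2) (2 * x) x := by
    simpa using (hasDerivAt_pow 2 x).const_add 1
  have hd2 : HasDerivAt (fun y : ℝ => 1 / (1 + y ^ 2))
      (-(2 * x) / (1 + x ^ 2) ^ 2) x := by
    simpa [one_div, Pi.inv_def] using hd.inv hne
  rw [hd2.deriv]
  have hx0 : 0 < x := hx.1
  have : 0 < (1 + x ^ 2) ^ 2 := by positivity
  exact div_neg_of_neg_of_pos (by linarith) this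

lemma arctan_lb_strict {t : ℝ} (ht : t ∈ Set.Ioo (0:ℝ) 1) :
    π / 4 * t < Real.arctan t := by
  obtain ⟨ht1, ht2⟩ := ht
  have hcc := arctan_strictConcaveOn.2
  have h := hcc (x := 0) (y := 1) (a := 1 - t) (b := t)
    (Set.mem_Icc.mpr ⟨le_refl 0, zero_le_one⟩)
    (Set.mem_Icc.mpr ⟨zero_le_one, le_refl 1⟩) (by norm_num)
    (by linarith) ht1 (by ring)
  simp only [smul_eq_mul, mul_zero, mul_one, zero_add, Real.arctan_zero,
    Real.arctan_one] at h
  linarith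

lemma cos_two_arctan (t : ℝ) :
    Real.cos (2 * Real.arctan t) = (1 - t ^ 2) / (1 + t ^ 2) := by
  have hne : (1 + t ^ 2) ≠ 0 := by positivity
  rw [Real.cos_two_mul, Real.cos_sq_arctan]
  field_simp
  ring

theorem redheffer_classical :
    ∀ x ∈ Set.Icc (0:ℝ) (1/2),
      (1 + 4*x^2) * Real.cos (π * x) ≥ 1 - 4*x^2 ∧
      ((1 + 4*x^2) * Real.cos (π * x) = 1 - 4*x^2 ↔ x = 0 ∨ x = 1/2) := by
  intro x hx
  obtain ⟨hx0, hx1⟩ := hx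
  have hpi := Real.pi_pos
  have hpos : (0:ℝ) < 1 + 4 * x ^ 2 := by positivity
  have hcos2 : Real.cos (2 * Real.arctan (2 * x)) = (1 - 4 * x ^ 2) / (1 + 4 * x ^ 2) := by
    rw [cos_two_arctan]; ring_nf
  have hat0 : 0 ≤ Real.arctan (2 * x) := by
    rw [← Real.arctan_zero]
    exact Real.arctan_strictMono.monotone (by linarith)
  have hat1 : Real.arctan (2 * x) ≤ π / 4 := by
    rw [← Real.arctan_one]
    exact Real.arctan_strictMono.monotone (by linarith)
  -- strict inequality in the interior
  have hstrict : x ∈ Set.Ioo (0:ℝ) (1/2) →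
      (1 + 4*x^2) * Real.cos (π * x) > 1 - 4*x^2 := by
    rintro ⟨h0, h1⟩
    have ht : (2 * x) ∈ Set.Ioo (0:ℝ) 1 := ⟨by linarith, by linarith⟩
    have h := arctan_lb_strict ht
    have hlt : π * x < 2 * Real.arctan (2 * x) := by linarith
    have hc : Real.cos (2 * Real.arctan (2 * x)) < Real.cos (π * x) :=
      Real.cos_lt_cos_of_nonneg_of_le_pi (by positivity) (by linarith) hlt
    have := (div_lt_iff₀ hpos).mp (hcos2 ▸ hc)
    linarith [mul_lt_mul_of_pos_left hc hpos]
  -- the inequality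
  have hineq : (1 + 4*x^2) * Real.cos (π * x) ≥ 1 - 4*x^2 := by
    rcases eq_or_lt_of_le hx0 with h0 | h0
    · simp [← h0]
    rcases eq_or_lt_of_le hx1 with h1 | h1
    · rw [h1, show π * (1/2:ℝ) = π/2 by ring, Real.cos_pi_div_two]; norm_num
    · exact le_of_lt (hstrict ⟨h0, h1⟩)
  refine ⟨hineq, ⟨?_, ?_⟩⟩
  · intro heq
    by_contra hne
    push_neg at hne
    obtain ⟨hne0, hne1⟩ := hne
    have h0 : 0 < x := lt_of_le_of_ne hx0 (Ne.symm hne0)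
    have h1 : x < 1/2 := lt_of_le_of_ne hx1 hne1
    exact absurd heq (ne_of_gt (hstrict ⟨h0, h1⟩))
  · rintro (rfl | rfl)
    · simp
    · rw [show π * (1/2:ℝ) = π/2 by ring, Real.cos_pi_div_two]; norm_num
end

section
/- For every real number β in the interval [0, π/2], the inequality cos((π/2)·tan(β/2)) ≥ cos(β) holds, with equality if and only if β = 0 or β = π/2. -/
open Real

lemma strictConvexOn_tan_aux : StrictConvexOn ℝ (Set.Icc (0:ℝ) (π/4)) Real.tan := by
  apply strictConvexOn_of_deriv2_pos (convex_Icc _ _)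
  · apply Real.continuousOn_tan.mono
    intro x hx
    simp only [Set.mem_Icc] at hx
    simp only [Set.mem_setOf_eq]
    have : Real.cos x > 0 := Real.cos_pos_of_mem_Ioo ⟨by linarith [Real.pi_pos], by
      nlinarith [Real.pi_pos]⟩
    exact ne_of_gt this
  · intro x hx
    rw [interior_Icc, Set.mem_Ioo] at hx
    have hc : Real.cos x > 0 := Real.cos_pos_of_mem_Ioo ⟨by linarith [Real.pi_pos], by
      nlinarith [Real.pi_pos]⟩
    have hs : Real.sin x > 0 := Real.sin_pos_of_pos_of_lt_pi hx.1 (by nlinarith [Real.pi_pos])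
    have hd1 : deriv Real.tan = fun y => 1 / Real.cos y ^ 2 := funext Real.deriv_tan
    have hne : Real.cos x ^ 2 ≠ 0 := by positivity
    have h2 : HasDerivAt (fun y => 1 / Real.cos y ^ 2)
        (-(2 * Real.cos x ^ 1 * (-Real.sin x)) / (Real.cos x ^ 2) ^ 2) x := by
      convert ((Real.hasDerivAt_cos x).pow 2).inv hne using 1
      · rfl
      · rfl
      · funext y; simp [one_div]
      · norm_num [Pi.pow_apply]
    have : deriv (deriv Real.tan) x = -(2 * Real.cos x ^ 1 * (-Real.sin x)) / (Real.cos x ^ 2) ^ 2 := by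
      rw [hd1]; exact h2.deriv
    simp only [Function.iterate_succ, Function.iterate_zero, Function.comp_apply, id_eq]
    rw [this, show -(2 * Real.cos x ^ 1 * (-Real.sin x)) = 2 * Real.cos x * Real.sin x by ring]
    positivity

lemma tan_lt_aux {x : ℝ} (hx0 : 0 < x) (hx : x < π/4) : Real.tan x < 4/π * x := by
  have hπ := Real.pi_pos
  have hb0 : (0:ℝ) < 4/π * x := by positivity
  have hb1 : 4/π * x < 1 := by
    rw [div_mul_eq_mul_div, div_lt_one hπ]; linarith
  have key := strictConvexOn_tan_aux.2
    (Set.mem_Icc.mpr ⟨le_refl (0:ℝ), by positivity⟩)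
    (Set.mem_Icc.mpr ⟨by positivity, le_refl (π/4)⟩)
    (ne_of_lt (by positivity : (0:ℝ) < π/4))
    (show (0:ℝ) < 1 - 4/π * x by linarith) hb0 (by ring)
  rw [smul_eq_mul, smul_eq_mul, smul_eq_mul, smul_eq_mul] at key
  have hxx : (1 - 4/π * x) * 0 + (4/π * x) * (π/4) = x := by
    field_simp
    ring
  rw [hxx, Real.tan_zero, Real.tan_pi_div_four, mul_zero, zero_add, mul_one] at key
  exact key

theorem cos_tan_half_ge_cos :
    ∀ β ∈ Set.Icc (0:ℝ) (π/2),
      Real.cos (π/2 * Real.tan (β/2)) ≥ Real.cos β ∧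
      (Real.cos (π/2 * Real.tan (β/2)) = Real.cos β ↔ β = 0 ∨ β = π/2) := by
  intro β hβ
  obtain ⟨hβ0, hβ2⟩ := hβ
  have hπ := Real.pi_pos
  by_cases h0 : β = 0
  · subst h0
    simp
  by_cases h2 : β = π/2
  · subst h2
    rw [show π/2/2 = π/4 by ring, Real.tan_pi_div_four, mul_one]
    simp
  -- strict interior
  have hβ0' : 0 < β := lt_of_le_of_ne hβ0 (Ne.symm h0)
  have hβ2' : β < π/2 := lt_of_le_of_ne hβ2 h2
  have htan : Real.tan (β/2) < 4/π * (β/2) := tan_lt_aux (by linarith) (by linarith)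
  have ht : π/2 * Real.tan (β/2) < β := by
    have : π/2 * (4/π * (β/2)) = β := by field_simp; ring
    nlinarith
  have ht0 : 0 ≤ π/2 * Real.tan (β/2) := by
    have := Real.tan_nonneg_of_nonneg_of_le_pi_div_two (x := β/2) (by linarith) (by linarith)
    positivity
  have hlt : Real.cos β < Real.cos (π/2 * Real.tan (β/2)) := by
    apply Real.strictAntiOn_cos ⟨ht0, by linarith⟩ ⟨hβ0, by linarith⟩ ht
  refine ⟨le_of_lt hlt, ?_⟩
  constructor
  · intro h; exact absurd h (ne_of_gt hlt)
  · rintro (h | h) <;> [exact absurd h h0; exact absurd h h2]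
end

section
/- For every integer m ≥ 2 and every real number y ∈ [0, 1], the inequality (1 − y/(2m+1)²)·(1 + y/(4m−2)) ≥ 1 + y/(4m+2) holds. -/
theorem induction_step_ineq (m : ℕ) (hm : 2 ≤ m) :
    ∀ y ∈ Set.Icc (0:ℝ) 1,
      (1 - y/(2*(m:ℝ)+1)^2) * (1 + y/(4*(m:ℝ)-2)) ≥ 1 + y/(4*(m:ℝ)+2) := by
  intro y hy
  obtain ⟨hy0, hy1⟩ := hy
  have hx : (2:ℝ) ≤ (m:ℝ) := by exact_mod_cast hm
  have h1 : (0:ℝ) < 2*(m:ℝ)+1 := by linarith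
  have h2 : (0:ℝ) < 4*(m:ℝ)-2 := by linarith
  have h3 : (0:ℝ) < 4*(m:ℝ)+2 := by linarith
  rw [ge_iff_le, ← sub_nonneg]
  have expand : (1 - y/(2*(m:ℝ)+1)^2) * (1 + y/(4*(m:ℝ)-2)) - (1 + y/(4*(m:ℝ)+2))
      = (y * ((4*(m:ℝ)-2)*(4*(m:ℝ)+2) + (2*(m:ℝ)+1)^2*(4*(m:ℝ)+2)
          - (4*(m:ℝ)-2)*(4*(m:ℝ)+2) - (2*(m:ℝ)+1)^2*(4*(m:ℝ)-2))
          - y^2*(4*(m:ℝ)+2) - y*(4*(m:ℝ)-2)*(4*(m:ℝ)+2))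
        / ((2*(m:ℝ)+1)^2 * (4*(m:ℝ)-2) * (4*(m:ℝ)+2)) := by
    generalize hd : 4*(m:ℝ)-2 = d at h2 ⊢
    have hdm : 4*(m:ℝ)+2 = d + 4 := by linarith
    rw [hdm] at h3 ⊢
    field_simp
    ring
  rw [expand]
  apply div_nonneg _ (by positivity)
  nlinarith [mul_nonneg hy0 (sub_nonneg.2 hy1), sq_nonneg y, mul_nonneg (mul_nonneg hy0 hy0) (by linarith : (0:ℝ) ≤ (m:ℝ)), mul_nonneg hy0 (by linarith : (0:ℝ) ≤ (m:ℝ)), mul_nonneg (mul_nonneg hy0 (sub_nonneg.2 hy1)) (by linarith : (0:ℝ) ≤ (m:ℝ))]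
end

section
/- Let α > 0 and let k ≥ 2 be an integer. If G_{k,α}(y) ≥ 0 for all y ∈ [0, 1], then for every integer n ≥ k, G_{n,α}(y) ≥ 0 for all y ∈ [0, 1]. -/
open Real

noncomputable def F (n : ℕ) (y : ℝ) : ℝ :=
  ∏ k ∈ Finset.Icc 2 n, (1 - y/(2*(k:ℝ)-1)^2)

noncomputable def G (n : ℕ) (α y : ℝ) : ℝ :=
  (1 + y) ^ (1/α) * F n y - (1 + y/(4*(n:ℝ)-2))

lemma key_step (c y : ℝ) (hc : 2 ≤ c) (hy0 : 0 ≤ y) (hy1 : y ≤ 1) :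
    1 + y/(4*(c+1)-2) ≤ (1 + y/(4*c-2)) * (1 - y/(2*(c+1)-1)^2) := by
  have h1 : (0:ℝ) < 4*c-2 := by linarith
  have h2 : (0:ℝ) < 2*(c+1)-1 := by linarith
  have h3 : (0:ℝ) < 4*(c+1)-2 := by linarith
  have key : 0 ≤ y*(4-y)/(2*(2*c-1)*(2*c+1)^2) := by
    apply div_nonneg (by nlinarith) (by nlinarith)
  have expand : (1 + y/(4*c-2)) * (1 - y/(2*(c+1)-1)^2) - (1 + y/(4*(c+1)-2)) = y*(4-y)/(2*(2*c-1)*(2*c+1)^2) := by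
    have h4 : (0:ℝ) < 2*(2*c-1)*(2*c+1)^2 := by nlinarith
    have h5 : (0:ℝ) < (2*(c+1)-1)^2 := by nlinarith
    rw [show (4*c-2:ℝ) = 2*(2*c-1) by ring, show (2*(c+1)-1:ℝ) = 2*c+1 by ring, show (4*(c+1)-2:ℝ) = 2*(2*c+1) by ring]
    field_simp [(by linarith : (0:ℝ) < 2*c-1).ne', (by linarith : (0:ℝ) < 2*c+1).ne']
    ring
  linarith [mul_nonneg hy0 hy0, sq_nonneg (2*c+1), mul_nonneg (mul_nonneg hy0 (le_of_lt h1)) (sq_nonneg (2*c+1)), mul_nonneg hy0 (mul_nonneg hy0 h1.le)]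

theorem G_nonneg_propagates (α : ℝ) (hα : 0 < α) (k : ℕ) (hk : 2 ≤ k)
    (h : ∀ y ∈ Set.Icc (0:ℝ) 1, 0 ≤ G k α y) :
    ∀ n : ℕ, k ≤ n → ∀ y ∈ Set.Icc (0:ℝ) 1, 0 ≤ G n α y := by
  intro n hn
  induction n, hn using Nat.le_induction with
  | base => exact h
  | succ n hn ih =>
    intro y hy
    obtain ⟨hy0, hy1⟩ := hy
    have hn2 : (2:ℝ) ≤ (n:ℝ) := by exact_mod_cast hk.trans hn
    have hF : F (n+1) y = F n y * (1 - y/(2*((n+1:ℕ):ℝ)-1)^2) := by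
      rw [F, F, Finset.prod_Icc_succ_top (by omega : 2 ≤ n+1)]
    have hfac : 0 ≤ 1 - y/(2*((n+1:ℕ):ℝ)-1)^2 := by
      push_cast
      have : y/(2*((n:ℝ)+1)-1)^2 ≤ 1 := by
        have hp : (0:ℝ) < (2*((n:ℝ)+1)-1)^2 := by nlinarith
        rw [div_le_one hp]
        nlinarith
      linarith
    have hih := ih y ⟨hy0, hy1⟩
    rw [G] at hih ⊢
    rw [hF, ← mul_assoc]
    have hstep : 1 + y/(4*((n:ℝ)+1)-2) ≤ (1 + y/(4*(n:ℝ)-2)) * (1 - y/(2*((n:ℝ)+1)-1)^2) :=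
      key_step (n:ℝ) y hn2 hy0 hy1
    have hmul : (1 + y/(4*(n:ℝ)-2)) * (1 - y/(2*((n:ℝ)+1)-1)^2) ≤
        (1 + y) ^ (1/α) * F n y * (1 - y/(2*((n:ℝ)+1)-1)^2) := by
      apply mul_le_mul_of_nonneg_right (by linarith) (by push_cast at hfac ⊢; exact hfac)
    push_cast
    push_cast at hfac
    linarith
end

section
/- Let α > 0. If there exists an integer k ≥ 2 such that G_{k,α}(y) ≥ 0 for all y ∈ [0, 1], then for every real number x ∈ [0, 1/2], the inequality (1 + 4x²)^{1/α}·cos(πx) ≥ 1 − 4x² holds. -/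
open Real

noncomputable def Q (n : ℕ) (y : ℝ) : ℝ :=
  ∏ j ∈ Finset.range n, (1 - y/(2*(j:ℝ)+1)^2)

lemma F_succ (m : ℕ) (hm : 1 ≤ m) (y : ℝ) : F (m+1) y = F m y * (1 - y/(2*(m:ℝ)+1)^2) := by
  rw [F, F, Finset.prod_Icc_succ_top (by omega : 2 ≤ m + 1)]
  congr 1
  push_cast
  ring_nf

lemma Q_eq_F (n : ℕ) (hn : 1 ≤ n) (y : ℝ) : Q n y = (1 - y) * F n y := by
  induction n, hn using Nat.le_induction with
  | base => simp [Q, F]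
  | succ m hm ih =>
    rw [Q, Finset.prod_range_succ, ← Q, ih, F_succ m hm]
    ring

lemma G_step (α : ℝ) (n : ℕ) (hn : 2 ≤ n) (y : ℝ) (hy0 : 0 ≤ y) (hy1 : y ≤ 1)
    (h : 0 ≤ G n α y) : 0 ≤ G (n+1) α y := by
  have hN : (2:ℝ) ≤ (n:ℝ) := by exact_mod_cast hn
  set N := (n:ℝ) with hNdef
  have ha : (0:ℝ) < 4*N-2 := by linarith
  have hb : (0:ℝ) < 2*N+1 := by linarith
  have hc : (0:ℝ) < 4*N+2 := by linarith
  have hF : F (n+1) y = F n y * (1 - y/(2*N+1)^2) := F_succ n (by omega) y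
  have ht : (0:ℝ) ≤ 1 - y/(2*N+1)^2 := by
    rw [sub_nonneg]
    rw [div_le_one (by positivity)]
    nlinarith
  have hG := h
  rw [G, sub_nonneg] at hG
  have step1 : (1 + y/(4*N-2)) * (1 - y/(2*N+1)^2)
      ≤ (1 + y) ^ (1/α) * F n y * (1 - y/(2*N+1)^2) :=
    mul_le_mul_of_nonneg_right hG ht
  have step2 : 1 + y/(4*N+2) ≤ (1 + y/(4*N-2)) * (1 - y/(2*N+1)^2) := by
    rw [← sub_nonneg]
    have e : (1 + y/(4*N-2)) * (1 - y/(2*N+1)^2) - (1 + y/(4*N+2))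
        = y*(4-y)/((4*N-2)*(2*N+1)^2) := by
      field_simp
      ring
    rw [e]
    apply div_nonneg (by nlinarith) (by positivity)
  rw [G, sub_nonneg, hF]
  push_cast
  calc 1 + y/(4*(N+1)-2) = 1 + y/(4*N+2) := by ring_nf
    _ ≤ (1 + y/(4*N-2)) * (1 - y/(2*N+1)^2) := step2
    _ ≤ (1 + y) ^ (1/α) * F n y * (1 - y/(2*N+1)^2) := step1
    _ = (1 + y) ^ (1/α) * (F n y * (1 - y/(2*N+1)^2)) := by ring

lemma double_prod (n : ℕ) (x : ℝ) :
    ∏ j ∈ Finset.range (2*n), (1 - (2*x)^2/((j:ℝ)+1)^2)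
      = Q n (4*x^2) * ∏ j ∈ Finset.range n, (1 - x^2/((j:ℝ)+1)^2) := by
  induction n with
  | zero => simp [Q]
  | succ m ih =>
    have h2 : 2*(m+1) = (2*m)+1+1 := by ring
    rw [h2, Finset.prod_range_succ, Finset.prod_range_succ, ih, Finset.prod_range_succ,
      show Q (m+1) (4*x^2) = Q m (4*x^2) * (1 - 4*x^2/(2*(m:ℝ)+1)^2) by
        rw [Q, Q, Finset.prod_range_succ]]
    have c1 : ((2*m : ℕ) : ℝ) = 2*(m:ℝ) := by push_cast; ring
    have c2 : ((2*m+1 : ℕ) : ℝ) = 2*(m:ℝ)+1 := by push_cast; ring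
    rw [c1, c2]
    have hm : (0:ℝ) < (m:ℝ)+1 := by positivity
    have e1 : 1 - (2*x)^2/(2*(m:ℝ)+1+1)^2 = 1 - x^2/((m:ℝ)+1)^2 := by
      congr 1
      rw [show (2*(m:ℝ)+1+1)^2 = 4*((m:ℝ)+1)^2 by ring, show (2*x)^2 = 4*x^2 by ring]
      rw [mul_div_mul_left _ _ (by norm_num : (4:ℝ) ≠ 0)]
    have e2 : 1 - (2*x)^2/(2*(m:ℝ)+1)^2 = 1 - 4*x^2/(2*(m:ℝ)+1)^2 := by
      congr 2
      ring
    rw [e1, e2]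
    ring

open Filter Topology in
lemma Q_tendsto (x : ℝ) (hx0 : 0 < x) (hx1 : x < 1/2) :
    Tendsto (fun n => Q n (4*x^2)) atTop (𝓝 (Real.cos (π*x))) := by
  have hπ := Real.pi_pos
  have hπx : 0 < π*x := mul_pos hπ hx0
  have hsin : Real.sin (π*x) ≠ 0 := by
    apply ne_of_gt
    apply Real.sin_pos_of_pos_of_lt_pi hπx
    nlinarith
  have hP : ∀ n : ℕ, 0 < ∏ j ∈ Finset.range n, (1 - x^2/((j:ℝ)+1)^2) := by
    intro n
    apply Finset.prod_pos
    intro j _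
    have h1 : (1:ℝ) ≤ ((j:ℝ)+1)^2 := by nlinarith [Nat.cast_nonneg (α := ℝ) j]
    have : x^2/((j:ℝ)+1)^2 < 1 := by
      rw [div_lt_one (by positivity)]
      nlinarith
    linarith
  have h2n : Tendsto (fun n : ℕ => 2*n) atTop atTop :=
    Filter.tendsto_atTop_atTop.mpr fun b => ⟨b, fun n hn => by omega⟩
  have hA := (Real.tendsto_euler_sin_prod (2*x)).comp h2n
  have hB := Real.tendsto_euler_sin_prod x
  have key := hA.div (hB.const_mul 2) (by simpa using mul_ne_zero two_ne_zero hsin)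
  have heq : ∀ n : ℕ,
      ((fun n : ℕ => π * (2*x) * ∏ j ∈ Finset.range n, ((1:ℝ) - (2*x)^2/((j:ℝ)+1)^2)) ∘
        (fun n : ℕ => 2*n)) n /
        (2 * (π * x * ∏ j ∈ Finset.range n, ((1:ℝ) - x^2/((j:ℝ)+1)^2))) = Q n (4*x^2) := by
    intro n
    simp only [Function.comp_apply]
    rw [double_prod]
    set P := ∏ j ∈ Finset.range n, ((1:ℝ) - x^2/((j:ℝ)+1)^2) with hPdef
    have hPn : 0 < P := hP n
    have hd : (2:ℝ) * (π * x * P) ≠ 0 := by positivity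
    rw [show π * (2*x) * (Q n (4*x^2) * P) = Q n (4*x^2) * (2*(π*x*P)) by ring,
      mul_div_assoc, div_self hd, mul_one]
  have hval : Real.sin (π*(2*x)) / (2 * Real.sin (π*x)) = Real.cos (π*x) := by
    rw [show π*(2*x) = 2*(π*x) by ring, Real.sin_two_mul]
    field_simp
  rw [← hval]
  exact key.congr heq

open Filter Topology in
theorem redheffer_from_induction (α : ℝ) (hα : 0 < α)
    (h : ∃ k : ℕ, 2 ≤ k ∧ ∀ y ∈ Set.Icc (0:ℝ) 1, 0 ≤ G k α y) :
    ∀ x ∈ Set.Icc (0:ℝ) (1/2),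
      (1 + 4*x^2) ^ (1/α) * Real.cos (π * x) ≥ 1 - 4*x^2 := by
  intro x hx
  obtain ⟨hx0, hx12⟩ := hx
  rcases eq_or_lt_of_le hx0 with h0 | h0
  · rw [← h0]
    norm_num [Real.one_rpow]
  rcases eq_or_lt_of_le hx12 with h12 | h12
  · rw [h12]
    rw [show π * (1/2 : ℝ) = π/2 by ring, Real.cos_pi_div_two]
    norm_num
  -- main case 0 < x < 1/2
  obtain ⟨k, hk2, hkG⟩ := h
  set y := 4*x^2 with hy
  have hy0 : 0 ≤ y := by positivity
  have hy1 : y ≤ 1 := by rw [hy]; nlinarith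
  have hall : ∀ n, k ≤ n → 0 ≤ G n α y := by
    intro n hn
    induction n, hn using Nat.le_induction with
    | base => exact hkG y ⟨hy0, hy1⟩
    | succ m hm ih => exact G_step α m (le_trans hk2 hm) y hy0 hy1 ih
  have hQt := Q_tendsto x h0 h12
  have hL : Tendsto (fun n => (1+y)^(1/α) * Q n y) atTop
      (𝓝 ((1+y)^(1/α) * Real.cos (π*x))) := hQt.const_mul _
  have hR : Tendsto (fun n : ℕ => (1-y) * (1 + y/(4*(n:ℝ)-2))) atTop (𝓝 (1-y)) := by
    have hd : Tendsto (fun n : ℕ => (4*(n:ℝ)-2)) atTop atTop := by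
      have := (tendsto_natCast_atTop_atTop (R := ℝ)).const_mul_atTop (by norm_num : (0:ℝ) < 4)
      simpa [sub_eq_add_neg] using tendsto_atTop_add_const_right atTop (-2 : ℝ) this
    have h0' : Tendsto (fun n : ℕ => y/(4*(n:ℝ)-2)) atTop (𝓝 0) :=
      tendsto_const_nhds.div_atTop hd
    have h1 : Tendsto (fun n : ℕ => 1 + y/(4*(n:ℝ)-2)) atTop (𝓝 (1+0)) :=
      tendsto_const_nhds.add h0'
    simpa using tendsto_const_nhds.mul h1
  have hle : (fun n : ℕ => (1-y) * (1 + y/(4*(n:ℝ)-2))) ≤ᶠ[atTop]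
      (fun n => (1+y)^(1/α) * Q n y) := by
    filter_upwards [eventually_ge_atTop k] with n hn
    have hG := hall n hn
    rw [G, sub_nonneg] at hG
    have h1y : (0:ℝ) ≤ 1-y := by linarith
    calc (1-y) * (1 + y/(4*(n:ℝ)-2))
        ≤ (1-y) * ((1+y)^(1/α) * F n y) := mul_le_mul_of_nonneg_left hG h1y
      _ = (1+y)^(1/α) * ((1-y) * F n y) := by ring
      _ = (1+y)^(1/α) * Q n y := by rw [Q_eq_F n (by omega) y]
  exact le_of_tendsto_of_tendsto hR hL hle
end

section
/- Let α > 0 and let n ≥ 2 be an integer. If G_{n,α}(y) ≥ 0 for all y ∈ [0, 1], then α ≤ log 2 / (log(1 + 1/(4n−2)) − log F_n(1)). -/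
open Real

theorem threshold_upper_bound (α : ℝ) (hα : 0 < α) (n : ℕ) (hn : 2 ≤ n)
    (h : ∀ y ∈ Set.Icc (0:ℝ) 1, 0 ≤ G n α y) :
    α ≤ Real.log 2 / (Real.log (1 + 1/(4*(n:ℝ)-2)) - Real.log (F n 1)) := by
  have hn6 : (6:ℝ) ≤ 4*(n:ℝ)-2 := by
    have : (2:ℝ) ≤ (n:ℝ) := by exact_mod_cast hn
    linarith
  have hFpos : 0 < F n 1 := by
    apply Finset.prod_pos
    intro k hk
    have hk2 : 2 ≤ k := (Finset.mem_Icc.mp hk).1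
    have hk2' : (2:ℝ) ≤ (k:ℝ) := by exact_mod_cast hk2
    have h3 : (3:ℝ) ≤ 2*(k:ℝ)-1 := by linarith
    have h9 : (9:ℝ) ≤ (2*(k:ℝ)-1)^2 := by nlinarith
    have : (1:ℝ)/(2*(k:ℝ)-1)^2 ≤ 1/9 := by
      apply div_le_div_of_nonneg_left <;> linarith
    linarith
  have hFle : F n 1 ≤ 1 := by
    apply Finset.prod_le_one
    · intro k hk
      have hk2 : 2 ≤ k := (Finset.mem_Icc.mp hk).1
      have hk2' : (2:ℝ) ≤ (k:ℝ) := by exact_mod_cast hk2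
      have h3 : (3:ℝ) ≤ 2*(k:ℝ)-1 := by linarith
      have h9 : (9:ℝ) ≤ (2*(k:ℝ)-1)^2 := by nlinarith
      have : (1:ℝ)/(2*(k:ℝ)-1)^2 ≤ 1/9 := by
        apply div_le_div_of_nonneg_left <;> linarith
      linarith
    · intro k hk
      have : (0:ℝ) ≤ 1/(2*(k:ℝ)-1)^2 := by positivity
      linarith
  have hD : 0 < Real.log (1 + 1/(4*(n:ℝ)-2)) - Real.log (F n 1) := by
    have h1 : 0 < Real.log (1 + 1/(4*(n:ℝ)-2)) := by
      apply Real.log_pos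
      have : (0:ℝ) < 1/(4*(n:ℝ)-2) := by positivity
      linarith
    have h2 : Real.log (F n 1) ≤ 0 := Real.log_nonpos hFpos.le hFle
    linarith
  -- use y = 1
  have hG := h 1 ⟨zero_le_one, le_refl 1⟩
  unfold G at hG
  have hkey : 1 + 1/(4*(n:ℝ)-2) ≤ (2:ℝ) ^ (1/α) * F n 1 := by
    norm_num at hG ⊢
    linarith
  have hlog : Real.log (1 + 1/(4*(n:ℝ)-2)) ≤ (1/α) * Real.log 2 + Real.log (F n 1) := by
    have := Real.log_le_log (by positivity) hkey
    rwa [Real.log_mul (by positivity) (ne_of_gt hFpos), Real.log_rpow (by norm_num)] at this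
  rw [le_div_iff₀ hD]
  have hlog2 : 0 < Real.log 2 := Real.log_pos (by norm_num)
  calc α * (Real.log (1 + 1/(4*(n:ℝ)-2)) - Real.log (F n 1))
      ≤ α * ((1/α) * Real.log 2) := by
        apply mul_le_mul_of_nonneg_left (by linarith) hα.le
    _ = Real.log 2 := by field_simp
end

section
/- The sequence (F_n(1))_{n ≥ 2} converges to π/4 as n → ∞; that is, lim_{n→∞} ∏_{k=2}^{n} (1 − 1/(2k−1)²) = π/4. -/
open Real Filter

lemma prod_eq_W : ∀ n : ℕ, 1 ≤ n →
    (∏ k ∈ Finset.Icc 2 n, (1 - 1/(2*(k:ℝ)-1)^2)) =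
      Real.Wallis.W (n - 1) * n / (2*(n:ℝ) - 1) := by
  intro n hn
  induction n with
  | zero => omega
  | succ m ih =>
    rcases Nat.lt_or_ge m 1 with h | h
    · interval_cases m
      norm_num [Real.Wallis.W]
    · have h2 : 2 ≤ m + 1 := by omega
      rw [Finset.prod_Icc_succ_top h2, ih h]
      have hW : Real.Wallis.W (m + 1 - 1) =
          Real.Wallis.W (m - 1) * ((2 * (m-1 : ℕ) + 2) / (2 * (m-1:ℕ) + 1) *
            ((2 * (m-1:ℕ) + 2) / (2 * (m-1:ℕ) + 3))) := by
        have : m + 1 - 1 = (m - 1) + 1 := by omega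
        rw [this, Real.Wallis.W_succ]
      rw [hW]
      have hm1 : ((m - 1 : ℕ) : ℝ) = (m : ℝ) - 1 := by
        push_cast [Nat.cast_sub h]; ring
      rw [hm1]
      have hmR : (1:ℝ) ≤ (m:ℝ) := by exact_mod_cast h
      have d1 : (2*(m:ℝ) - 1) ≠ 0 := by nlinarith
      have d2 : (2*(m:ℝ) + 1) ≠ 0 := by nlinarith
      have d3 : (2*(m:ℝ) - 1 + 3) ≠ 0 := by nlinarith
      have d4 : (1 + (m:ℝ)*4 + (m:ℝ)^2*4) ≠ 0 := by nlinarith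
      have d5 : ((-1:ℝ) - (m:ℝ)*2 + (m:ℝ)^2*4 + (m:ℝ)^3*8) ≠ 0 := by nlinarith
      have d6 : (2*((m:ℝ)+1) - 1) ≠ 0 := by nlinarith
      push_cast
      have e1 : 2*((m:ℝ)-1)+1 = 2*(m:ℝ)-1 := by ring
      have e2 : 2*((m:ℝ)-1)+3 = 2*(m:ℝ)+1 := by ring
      have e3 : 2*((m:ℝ)+1)-1 = 2*(m:ℝ)+1 := by ring
      have e4 : 2*((m:ℝ)-1)+2 = 2*(m:ℝ) := by ring
      rw [e1, e2, e3, e4]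
      field_simp
      ring

theorem F_one_tendsto_pi_div_four :
    Filter.Tendsto (fun n : ℕ => ∏ k ∈ Finset.Icc 2 n, (1 - 1/(2*(k:ℝ)-1)^2))
      Filter.atTop (nhds (π/4)) := by
  have hW : Tendsto (fun n : ℕ => Real.Wallis.W (n - 1)) atTop (nhds (π/2)) :=
    Real.Wallis.tendsto_W_nhds_pi_div_two.comp (tendsto_sub_atTop_nat 1)
  have hden : Tendsto (fun n : ℕ => (2 : ℝ) - 1/(n:ℝ)) atTop (nhds 2) := by
    have := tendsto_one_div_atTop_nhds_zero_nat (𝕜 := ℝ)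
    simpa using tendsto_const_nhds.sub this
  have hr' : Tendsto (fun n : ℕ => 1/((2:ℝ) - 1/(n:ℝ))) atTop (nhds (1/2)) :=
    tendsto_const_nhds.div hden (by norm_num)
  have hr : Tendsto (fun n : ℕ => (n:ℝ)/(2*(n:ℝ) - 1)) atTop (nhds (1/2)) := by
    apply hr'.congr'
    filter_upwards [eventually_ge_atTop 1] with n hn
    have h0 : (1:ℝ) ≤ (n:ℝ) := by exact_mod_cast hn
    have h1 : (2*(n:ℝ) - 1) ≠ 0 := by nlinarith
    field_simp
  have h24 : π/4 = π/2 * (1/2) := by ring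
  rw [h24]
  apply (hW.mul hr).congr'
  filter_upwards [eventually_ge_atTop 1] with n hn
  rw [prod_eq_W n hn, mul_div_assoc]
end

section
/- Let α > 0 and let n ≥ 2 be an integer. Then (1 + y)^{1/α}·F_n(y) ≥ 1 for all y ∈ [0, 1] if and only if 2^{1/α}·F_n(1) ≥ 1 (equivalently, if and only if α ≤ −log 2 / log F_n(1)). -/
open Real

lemma sq_ge {n : ℕ} (k : ℕ) (hk : k ∈ Finset.Icc 2 n) : (9:ℝ) ≤ (2*(k:ℝ)-1)^2 := by
  simp only [Finset.mem_Icc] at hk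
  have : (2:ℝ) ≤ (k:ℝ) := by exact_mod_cast hk.1
  nlinarith

lemma factor_pos {n : ℕ} {y : ℝ} (hy1 : y ≤ 1) (k : ℕ)
    (hk : k ∈ Finset.Icc 2 n) : 0 < 1 - y/(2*(k:ℝ)-1)^2 := by
  have h9 := sq_ge k hk
  have h : y/(2*(k:ℝ)-1)^2 < 1 := (div_lt_one (by linarith)).2 (by linarith)
  linarith

lemma F_pos {n : ℕ} {y : ℝ} (hy1 : y ≤ 1) : 0 < F n y :=
  Finset.prod_pos (fun k hk => factor_pos hy1 k hk)

lemma F_one_lt_one {n : ℕ} (hn : 2 ≤ n) : F n 1 < 1 := by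
  have hne : (Finset.Icc 2 n).Nonempty := ⟨2, by simp [Finset.mem_Icc, hn]⟩
  have := Finset.prod_lt_prod_of_nonempty (f := fun k : ℕ => 1 - 1/(2*(k:ℝ)-1)^2)
    (g := fun _ => (1:ℝ)) (fun k hk => factor_pos le_rfl k hk)
    (fun k hk => by
      have h9 := sq_ge k hk
      have : (0:ℝ) < 1/(2*(k:ℝ)-1)^2 := by positivity
      linarith) hne
  simpa [F] using this

lemma rpow_le_lin {a y : ℝ} (ha : 0 ≤ a) (hy0 : 0 ≤ y) (hy1 : y ≤ 1) :
    a ^ y ≤ 1 - y + y * a := by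
  have := Real.geom_mean_le_arith_mean2_weighted (by linarith : (0:ℝ) ≤ 1 - y) hy0
    zero_le_one ha (by ring)
  simpa using this

lemma F_ge {n : ℕ} {y : ℝ} (hy0 : 0 ≤ y) (hy1 : y ≤ 1) : (F n 1) ^ y ≤ F n y := by
  rw [F, ← Real.finset_prod_rpow _ _ (fun k hk => (factor_pos le_rfl k hk).le)]
  apply Finset.prod_le_prod
  · intro k hk
    exact Real.rpow_nonneg (factor_pos le_rfl k hk).le _
  · intro k hk
    have h := rpow_le_lin (factor_pos (n := n) le_rfl k hk).le hy0 hy1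
    have : 1 - y + y * (1 - 1/(2*(k:ℝ)-1)^2) = 1 - y/(2*(k:ℝ)-1)^2 := by ring
    rw [this] at h
    exact h

lemma key {α : ℝ} (hα : 0 < α) {n : ℕ} (hn : 2 ≤ n)
    (h1 : (2:ℝ) ^ (1/α) * F n 1 ≥ 1) {y : ℝ} (hy0 : 0 ≤ y) (hy1 : y ≤ 1) :
    (1 + y) ^ (1/α) * F n y ≥ 1 := by
  have hF1 : 0 < F n 1 := F_pos le_rfl
  have h2y : (2:ℝ) ^ y ≤ 1 + y := by
    have := rpow_le_lin (by norm_num : (0:ℝ) ≤ 2) hy0 hy1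
    linarith
  have hstep1 : ((2:ℝ) ^ (1/α) * F n 1) ^ y ≤ (1 + y) ^ (1/α) * F n y := by
    rw [Real.mul_rpow (by positivity) hF1.le]
    apply mul_le_mul
    · rw [← Real.rpow_mul (by norm_num), mul_comm, Real.rpow_mul (by norm_num)]
      exact Real.rpow_le_rpow (Real.rpow_nonneg (by norm_num) y) h2y (by positivity)
    · exact F_ge hy0 hy1
    · exact Real.rpow_nonneg hF1.le _
    · positivity
  calc (1:ℝ) = 1 ^ y := (Real.one_rpow y).symm
    _ ≤ ((2:ℝ) ^ (1/α) * F n 1) ^ y := Real.rpow_le_rpow zero_le_one h1 hy0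
    _ ≤ _ := hstep1

theorem ge_one_iff (α : ℝ) (hα : 0 < α) (n : ℕ) (hn : 2 ≤ n) :
    ((∀ y ∈ Set.Icc (0:ℝ) 1, (1 + y) ^ (1/α) * F n y ≥ 1) ↔ (2:ℝ) ^ (1/α) * F n 1 ≥ 1) ∧
    ((∀ y ∈ Set.Icc (0:ℝ) 1, (1 + y) ^ (1/α) * F n y ≥ 1) ↔
      α ≤ -Real.log 2 / Real.log (F n 1)) := by
  have hF1 : 0 < F n 1 := F_pos le_rfl
  have hL : Real.log (F n 1) < 0 := Real.log_neg hF1 (F_one_lt_one hn)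
  have h1 : (∀ y ∈ Set.Icc (0:ℝ) 1, (1 + y) ^ (1/α) * F n y ≥ 1) ↔
      (2:ℝ) ^ (1/α) * F n 1 ≥ 1 := by
    constructor
    · intro h
      have := h 1 ⟨zero_le_one, le_rfl⟩
      norm_num [one_div] at this ⊢
      exact this
    · intro h y hy
      exact key hα hn h hy.1 hy.2
  refine ⟨h1, h1.trans ?_⟩
  have hrw : (2:ℝ) ^ (1/α) * F n 1 ≥ 1 ↔ 0 ≤ Real.log 2 + α * Real.log (F n 1) := by
    rw [ge_iff_le, ← Real.log_nonneg_iff (by positivity),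
      Real.log_mul (by positivity) hF1.ne', Real.log_rpow two_pos,
      show 1/α * Real.log 2 + Real.log (F n 1)
        = (Real.log 2 + α * Real.log (F n 1))/α by field_simp,
      le_div_iff₀ hα, zero_mul]
  rw [hrw]
  have hd : -Real.log 2 / Real.log (F n 1) = Real.log 2 / (-Real.log (F n 1)) := by
    rw [div_neg, neg_div]
  rw [hd, le_div_iff₀ (by linarith)]
  constructor <;> intro h <;> nlinarith
end

section
/- For every real number α with 0 < α ≤ log 2 / log(4/π) and every real number x ∈ [0, 1/2], the inequality (1 + 4x²)^{1/α}·cos(πx) ≥ 1 − 4x² holds. -/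
open Real

set_option maxHeartbeats 1000000

/-- Chord bound: by concavity of `u ↦ u^β` with `β = log(4/π)/log 2` (so that `2^β = 4/π`),
the chord from `(1,1)` to `(2, 4/π)` lies below the graph. -/
lemma redheffer_chord_aux (u : ℝ) (hu0 : 0 ≤ u) (hu1 : u ≤ 1) :
    1 + (4/π - 1) * u ≤ (1 + u) ^ (Real.log (4/π) / Real.log 2) := by
  set β : ℝ := Real.log (4/π) / Real.log 2 with hβ
  have hπ4 : π < 4 := pi_lt_four
  have hπ2 : (2:ℝ) < π := by linarith [pi_gt_three]
  have h4π1 : (1:ℝ) < 4/π := by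
    rw [lt_div_iff₀ pi_pos]; linarith
  have h4π2 : (4:ℝ)/π < 2 := by
    rw [div_lt_iff₀ pi_pos]; linarith
  have hlog2 : (0:ℝ) < Real.log 2 := Real.log_pos (by norm_num)
  have hβ0 : 0 ≤ β := div_nonneg (Real.log_nonneg h4π1.le) hlog2.le
  have hβ1 : β ≤ 1 := by
    rw [hβ, div_le_one hlog2]
    exact Real.log_le_log (by positivity) h4π2.le
  have h2β : (2:ℝ) ^ β = 4/π := by
    rw [hβ, Real.rpow_def_of_pos (by norm_num : (0:ℝ) < 2)]
    rw [mul_div_cancel₀ _ hlog2.ne', Real.exp_log (by positivity)]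
  have hconc := (Real.concaveOn_rpow hβ0 hβ1).2 (Set.mem_Ici.2 (by norm_num : (0:ℝ) ≤ 1))
    (Set.mem_Ici.2 (by norm_num : (0:ℝ) ≤ 2)) (by linarith : 0 ≤ 1 - u) hu0 (by ring)
  simp only [smul_eq_mul] at hconc
  have h1 : ((1-u) * 1 + u * 2) = 1 + u := by ring
  rw [h1, Real.one_rpow, h2β] at hconc
  calc 1 + (4/π - 1) * u = (1-u) * 1 + u * (4/π) := by ring
    _ ≤ (1+u) ^ β := hconc

/-- Polynomial lower bound for `cos (π x)` on `[0, 0.31]`, obtained from the double angle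
formula and the quartic Taylor bounds on `sin` and `cos` at `π x / 4`. -/
lemma redheffer_cos_poly_lb (x : ℝ) (hx0 : 0 ≤ x) (hx : x ≤ 0.31) :
    1 - 4.93481*x^2 + 3.845*x^4 ≤ Real.cos (π*x) := by
  have hπl : 3.141592 < π := pi_gt_d6
  have hπu : π < 3.141593 := pi_lt_d6
  set w : ℝ := π*x/4 with hw
  have hw0 : 0 ≤ w := by positivity
  have hπx : π*x ≤ 3.141593*0.31 := by nlinarith
  have hwu : w ≤ 0.2435 := by rw [hw]; nlinarith
  have habs : |w| ≤ 1 := abs_le.2 ⟨by linarith, by linarith⟩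
  have hsb := (abs_sub_le_iff.1 (Real.sin_bound habs)).1
  have hcb := (abs_sub_le_iff.1 (Real.cos_bound habs)).1
  rw [abs_of_nonneg hw0] at hsb hcb
  have hsw0 : 0 ≤ Real.sin w :=
    sin_nonneg_of_nonneg_of_le_pi hw0 (by linarith [pi_gt_three])
  have hcw0 : 0 ≤ Real.cos w := by
    apply Real.cos_nonneg_of_mem_Icc
    constructor <;> [linarith [pi_gt_three]; linarith [pi_gt_three]]
  have hS0 : (0:ℝ) ≤ w - w^3/6 + w^4*(5/96) := by nlinarith
  have hprod : Real.sin w * Real.cos w ≤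
      (w - w^3/6 + w^4*(5/96)) * (1 - w^2/2 + w^4*(5/96)) :=
    mul_le_mul (by nlinarith [mul_le_mul_of_nonneg_left hwu (pow_nonneg hw0 4)]) (by linarith) hcw0 hS0
  have h3 : (0:ℝ) ≤ w^3 := pow_nonneg hw0 3
  have h4 : w^4 ≤ 0.2435*w^3 := by nlinarith
  have h5 : w^5 ≤ 0.0592923*w^3 := by nlinarith [sq_nonneg (w - 0.2435)]
  have h6 : (0:ℝ) ≤ w^6 := pow_nonneg hw0 6
  have h7 : (0:ℝ) ≤ w^7 := pow_nonneg hw0 7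
  have h8 : w^8 ≤ 0.000858*w^3 := by
    nlinarith [h5, h4, pow_nonneg hw0 5, pow_nonneg hw0 4, sq_nonneg w]
  have hsin2 : Real.sin (2*w) ≤ 2*w - 1.288*w^3 := by
    rw [Real.sin_two_mul]
    nlinarith [hprod, h3, h4, h5, h6, h7, h8]
  have hs2w0 : 0 ≤ Real.sin (2*w) :=
    sin_nonneg_of_nonneg_of_le_pi (by linarith) (by linarith [pi_gt_three])
  have hq0 : 0 ≤ 2*w - 1.288*w^3 := by nlinarith
  have hsq : Real.sin (2*w)^2 ≤ (2*w - 1.288*w^3)^2 := by nlinarith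
  have hcosx : Real.cos (π*x) = 1 - 2*Real.sin (2*w)^2 := by
    have h4' : π*x = 2*(2*w) := by rw [hw]; ring
    rw [h4', Real.cos_two_mul, Real.cos_sq']; ring
  rw [hcosx]
  set v : ℝ := π*x with hv
  have hv0 : 0 ≤ v := by positivity
  have hvx_l : 3.141592*x ≤ v := by rw [hv]; nlinarith
  have hvx_u : v ≤ 3.141593*x := by rw [hv]; nlinarith
  have hv2u : v^2 ≤ 9.8696066*x^2 := by nlinarith
  have hv4l : 97.409*x^4 ≤ v^4 := by
    have h := pow_le_pow_left₀ (by positivity : (0:ℝ) ≤ 3.141592*x) hvx_l 4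
    nlinarith [pow_nonneg hx0 4]
  have hv2c : v^2 ≤ 0.948482 := by nlinarith
  have hv6 : v^6 ≤ 0.948482*v^4 := by
    have h := mul_le_mul_of_nonneg_right hv2c (pow_nonneg hv0 4)
    calc v^6 = v^2 * v^4 := by ring
      _ ≤ 0.948482*v^4 := h
  have hwv : w = v/4 := by rw [hw, hv]
  have hfin : 2*(2*w - 1.288*w^3)^2 ≤ 4.93481*x^2 - 3.845*x^4 := by
    rw [hwv]
    nlinarith [hv2u, hv4l, hv6, pow_nonneg hv0 4, sq_nonneg v]
  linarith [hsq, hfin]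

/-- Cubic lower bound for `sin (π t)` on `[0, 0.19]`, from the double angle formula and
quartic Taylor bounds at `π t / 2`. -/
lemma redheffer_sin_poly_lb (t : ℝ) (ht0 : 0 ≤ t) (ht : t ≤ 0.19) :
    π*t - 0.17*(π*t)^3 ≤ Real.sin (π*t) := by
  have hπl : 3.141592 < π := pi_gt_d6
  have hπu : π < 3.141593 := pi_lt_d6
  set w : ℝ := π*t/2 with hw
  have hw0 : 0 ≤ w := by positivity
  have hπt : π*t ≤ 3.141593*0.19 := by nlinarith
  have hwu : w ≤ 0.29846 := by rw [hw]; nlinarith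
  have habs : |w| ≤ 1 := abs_le.2 ⟨by linarith, by linarith⟩
  have hsb := (abs_sub_le_iff.1 (Real.sin_bound habs)).2
  have hcb := (abs_sub_le_iff.1 (Real.cos_bound habs)).2
  rw [abs_of_nonneg hw0] at hsb hcb
  have hsw0 : 0 ≤ Real.sin w :=
    sin_nonneg_of_nonneg_of_le_pi hw0 (by linarith [pi_gt_three])
  have hLS0 : (0:ℝ) ≤ w - w^3/6 - w^4*(5/96) := by nlinarith [pow_nonneg hw0 3]
  have hLC0 : (0:ℝ) ≤ 1 - w^2/2 - w^4*(5/96) := by nlinarith [sq_nonneg w, sq_nonneg (w*w)]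
  have hprod : (w - w^3/6 - w^4*(5/96)) * (1 - w^2/2 - w^4*(5/96)) ≤
      Real.sin w * Real.cos w :=
    mul_le_mul (by nlinarith [mul_le_mul_of_nonneg_left hwu (pow_nonneg hw0 4)]) (by linarith) hLC0 hsw0
  have h3 : (0:ℝ) ≤ w^3 := pow_nonneg hw0 3
  have h4 : w^4 ≤ 0.29846*w^3 := by nlinarith
  have h5 : w^5 ≤ 0.08908*w^3 := by nlinarith [sq_nonneg (w - 0.29846)]
  have h6 : w^6 ≤ 0.0265885*w^3 := by
    nlinarith [h5, pow_nonneg hw0 4, pow_nonneg hw0 5]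
  have h7 : w^7 ≤ 0.0079357*w^3 := by
    nlinarith [h6, pow_nonneg hw0 5, pow_nonneg hw0 6]
  have h8 : w^8 ≤ 0.0023687*w^3 := by
    nlinarith [h7, pow_nonneg hw0 6, pow_nonneg hw0 7]
  have hsin2 : 2*w - 1.36*w^3 ≤ Real.sin (2*w) := by
    rw [Real.sin_two_mul]
    nlinarith [hprod, h3, h4, h5, h6, h7, h8]
  have h2w : π*t = 2*w := by rw [hw]; ring
  rw [h2w]
  nlinarith [hsin2, h3]

/-- The core inequality: `π (1 - 4x²) ≤ (π + (4-π)·4x²) · cos (π x)` on `[0, 1/2]`. -/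
lemma redheffer_core (x : ℝ) (hx0 : 0 ≤ x) (hx2 : x ≤ 1/2) :
    π*(1 - 4*x^2) ≤ (π + (4-π)*(4*x^2)) * Real.cos (π*x) := by
  have hπl : 3.141592 < π := pi_gt_d6
  have hπu : π < 3.141593 := pi_lt_d6
  have hF0 : 0 ≤ π + (4-π)*(4*x^2) := by nlinarith [sq_nonneg x]
  rcases le_or_gt x 0.31 with h | h
  · have hcos := redheffer_cos_poly_lb x hx0 h
    have hP0 : 0 ≤ 1 - 4.93481*x^2 + 3.845*x^4 := by nlinarith [sq_nonneg x, sq_nonneg (x*x)]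
    calc π*(1 - 4*x^2) ≤ (π + (4-π)*(4*x^2)) * (1 - 4.93481*x^2 + 3.845*x^4) := by
          nlinarith [sq_nonneg x, sq_nonneg (x*x), mul_nonneg hx0 hx0,
            mul_nonneg (mul_nonneg hx0 hx0) hx0,
            mul_nonneg (mul_nonneg (mul_nonneg hx0 hx0) hx0) hx0,
            sq_nonneg (x*x*x)]
      _ ≤ (π + (4-π)*(4*x^2)) * Real.cos (π*x) :=
          mul_le_mul_of_nonneg_left hcos hF0
  · set t : ℝ := 1/2 - x with htdef
    have ht0 : 0 ≤ t := by rw [htdef]; linarith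
    have ht : t ≤ 0.19 := by rw [htdef]; linarith
    have hs := redheffer_sin_poly_lb t ht0 ht
    have hcos : Real.cos (π*x) = Real.sin (π*t) := by
      rw [show π*x = π/2 - π*t by rw [htdef]; ring, Real.cos_pi_div_two_sub]
    have hxt : x = 1/2 - t := by rw [htdef]; ring
    have hp2l : 9.8696002 ≤ π^2 := by nlinarith [sq_nonneg (π - 3.141592)]
    have hp2u : π^2 ≤ 9.8696066 := by nlinarith [sq_nonneg (π - 3.141593)]
    have hk1 : 0.81*t^2 ≤ t^2*(1-t) := by
      nlinarith [mul_nonneg (mul_nonneg ht0 ht0) (sub_nonneg.2 ht)]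
    have hk2 : (5.761:ℝ) ≤ 0.68*(4-π)*π^2 := by nlinarith
    have hk3 : 4.666*t^2 ≤ 0.68*(4-π)*π^2*(t^2*(1-t)) := by
      nlinarith [hk1, hk2, mul_nonneg (mul_nonneg ht0 ht0) (sub_nonneg.2 ht),
        sq_nonneg t]
    have hE : 0 ≤ 4 - 4*(4-π)*(1-t) - 0.68*π^2*t + 0.68*(4-π)*π^2*(t^2*(1-t)) := by
      nlinarith [hk3, sq_nonneg (t - 0.3), hp2l, hp2u, ht0, ht]
    calc π*(1 - 4*x^2) ≤ (π + (4-π)*(4*x^2)) * (π*t - 0.17*(π*t)^3) := by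
          rw [hxt]
          have hD : (π + (4-π)*(4*(1/2-t)^2))*(π*t-0.17*(π*t)^3) - π*(1-4*(1/2-t)^2)
              = π*t^2*(4 - 4*(4-π)*(1-t) - 0.68*π^2*t + 0.68*(4-π)*π^2*(t^2*(1-t))) := by
            ring
          nlinarith [hD, mul_nonneg (mul_nonneg pi_pos.le (sq_nonneg t)) hE]
      _ ≤ (π + (4-π)*(4*x^2)) * Real.cos (π*x) := by
          rw [hcos]; exact mul_le_mul_of_nonneg_left hs hF0

theorem generalized_redheffer_sufficiency (α : ℝ) (h1 : 0 < α)
    (h2 : α ≤ Real.log 2 / Real.log (4/π)) :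
    ∀ x ∈ Set.Icc (0:ℝ) (1/2),
      (1 + 4*x^2) ^ (1/α) * Real.cos (π * x) ≥ 1 - 4*x^2 := by
  intro x hx
  obtain ⟨hx0, hx2⟩ := hx
  have hu0 : 0 ≤ 4*x^2 := by positivity
  have hu1 : 4*x^2 ≤ 1 := by nlinarith
  have hchord := redheffer_chord_aux (4*x^2) hu0 hu1
  have hlog2 : (0:ℝ) < Real.log 2 := Real.log_pos (by norm_num)
  have hlog4π : (0:ℝ) < Real.log (4/π) := by
    apply Real.log_pos
    rw [lt_div_iff₀ pi_pos]; linarith [pi_lt_four]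
  have hβα : Real.log (4/π) / Real.log 2 ≤ 1/α := by
    have h := one_div_le_one_div_of_le h1 h2
    rwa [one_div_div] at h
  have hbase : (1:ℝ) ≤ 1 + 4*x^2 := by linarith
  have hr : (1+4*x^2) ^ (Real.log (4/π) / Real.log 2) ≤ (1+4*x^2) ^ (1/α) :=
    Real.rpow_le_rpow_of_exponent_le hbase hβα
  have hcos0 : 0 ≤ Real.cos (π * x) := by
    apply Real.cos_nonneg_of_mem_Icc
    constructor
    · nlinarith [pi_pos]
    · nlinarith [pi_pos]
  have hcore := redheffer_core x hx0 hx2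
  have hcore' : 1 - 4*x^2 ≤ (1 + (4/π - 1)*(4*x^2)) * Real.cos (π*x) := by
    have hform : (1 + (4/π - 1)*(4*x^2)) = (π + (4-π)*(4*x^2))/π := by
      field_simp
    rw [hform, div_mul_eq_mul_div, le_div_iff₀ pi_pos]
    nlinarith [hcore]
  have hfac1 : (1 + (4/π - 1)*(4*x^2)) * Real.cos (π*x)
      ≤ (1+4*x^2) ^ (Real.log (4/π) / Real.log 2) * Real.cos (π*x) :=
    mul_le_mul_of_nonneg_right hchord hcos0
  have hfac2 : (1+4*x^2) ^ (Real.log (4/π) / Real.log 2) * Real.cos (π*x)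
      ≤ (1+4*x^2) ^ (1/α) * Real.cos (π*x) :=
    mul_le_mul_of_nonneg_right hr hcos0
  linarith
end

section
/- For every real number α with α > log 2 / log(4/π), there exists a real number x ∈ [0, 1/2] such that (1 + 4x²)^{1/α}·cos(πx) < 1 − 4x². -/
open Real

theorem generalized_redheffer_necessity (α : ℝ) (h : Real.log 2 / Real.log (4/π) < α) :
    ∃ x ∈ Set.Icc (0:ℝ) (1/2),
      (1 + 4*x^2) ^ (1/α) * Real.cos (π * x) < 1 - 4*x^2 := by
  have hπ : 0 < π := Real.pi_pos
  have hπ4 : π < 4 := by linarith [Real.pi_lt_d2]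
  have h4π : (1:ℝ) < 4/π := (one_lt_div hπ).2 hπ4
  have hlog4π : 0 < Real.log (4/π) := Real.log_pos h4π
  have hlog2 : 0 < Real.log 2 := Real.log_pos (by norm_num)
  have hα : 0 < α := lt_trans (div_pos hlog2 hlog4π) h
  -- 2^(1/α) < 4/π
  have hkey : (2:ℝ) ^ (1/α) < 4/π := by
    have h1 : (1/α) * Real.log 2 < Real.log (4/π) := by
      rw [div_lt_iff₀ hlog4π] at h
      rw [one_div, inv_mul_lt_iff₀ hα] at *
      linarith [mul_comm α (Real.log (4/π))]
    calc (2:ℝ) ^ (1/α) = Real.exp ((1/α) * Real.log 2) := by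
          rw [Real.rpow_def_of_pos (by norm_num), mul_comm]
      _ < Real.exp (Real.log (4/π)) := Real.exp_lt_exp.2 h1
      _ = 4/π := Real.exp_log (by positivity)
  set c : ℝ := (2:ℝ) ^ (1/α) * (π/4) with hc_def
  have hc1 : c < 1 := by
    rw [hc_def]
    calc (2:ℝ) ^ (1/α) * (π/4) < (4/π) * (π/4) := by
          apply mul_lt_mul_of_pos_right hkey (by positivity)
      _ = 1 := by field_simp
  have hc0 : 0 < c := by positivity
  refine ⟨c/2, ⟨by positivity, by linarith⟩, ?_⟩
  set t : ℝ := 1/2 - c/2 with ht_def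
  have ht0 : 0 < t := by rw [ht_def]; linarith
  have hcos : Real.cos (π * (c/2)) = Real.sin (π * t) := by
    rw [ht_def]
    have : π * (c/2) = π/2 - π * (1/2 - c/2) := by ring
    rw [this, Real.cos_pi_div_two_sub]
  have hsin_lt : Real.sin (π * t) < π * t := Real.sin_lt (by positivity)
  have hsin_pos : 0 ≤ Real.sin (π * t) := by
    apply Real.sin_nonneg_of_nonneg_of_le_pi (by positivity)
    have : t ≤ 1 := by rw [ht_def]; linarith
    nlinarith
  have hbase : (1 + 4*(c/2)^2 : ℝ) ^ (1/α) ≤ (2:ℝ) ^ (1/α) := by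
    apply Real.rpow_le_rpow (by positivity) (by nlinarith) (by positivity)
  have hbase_pos : (0:ℝ) < (1 + 4*(c/2)^2 : ℝ) ^ (1/α) := by positivity
  have h2pos : (0:ℝ) < (2:ℝ) ^ (1/α) := by positivity
  rw [hcos]
  have step1 : (1 + 4*(c/2)^2 : ℝ) ^ (1/α) * Real.sin (π * t) ≤
      (2:ℝ) ^ (1/α) * Real.sin (π * t) := mul_le_mul_of_nonneg_right hbase hsin_pos
  have step2 : (2:ℝ) ^ (1/α) * Real.sin (π * t) < (2:ℝ) ^ (1/α) * (π * t) :=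
    mul_lt_mul_of_pos_left hsin_lt h2pos
  have step3 : (2:ℝ) ^ (1/α) * (π * t) = 4 * c * t := by rw [hc_def]; ring
  have step4 : 4 * c * t < 1 - 4*(c/2)^2 := by
    rw [ht_def]
    nlinarith [sq_nonneg (1 - c)]
  calc (1 + 4*(c/2)^2 : ℝ) ^ (1/α) * Real.sin (π * t)
      ≤ (2:ℝ) ^ (1/α) * Real.sin (π * t) := step1
    _ < (2:ℝ) ^ (1/α) * (π * t) := step2
    _ = 4 * c * t := step3
    _ < 1 - 4*(c/2)^2 := step4
end

section
/- For every real number α with 0 < α < log 2 / log(4/π) and every real number x ∈ (0, 1/2), the strict inequality (1 + 4x²)^{1/α}·cos(πx) > 1 − 4x² holds; equality in (1 + 4x²)^{1/α}·cos(πx) ≥ 1 − 4x² over [0, 1/2] occurs exactly at x = 0 and x = 1/2. -/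
open Real

/-! Auxiliary lemmas for the generalized Redheffer inequality. -/

lemma my_sin_ge {t : ℝ} (ht : 0 ≤ t) : t - t^3/6 ≤ Real.sin t := by
  have h : ∀ u : ℝ, HasDerivAt (fun v : ℝ => Real.sin v - (v - v^3/6)) (Real.cos u - (1 - u^2/2)) u := by
    intro u
    have h1 := (Real.hasDerivAt_sin u).sub (((hasDerivAt_id u).sub ((hasDerivAt_pow 3 u).div_const 6)))
    refine h1.congr_deriv ?_
    simp; ring
  have mono : Monotone fun v : ℝ => Real.sin v - (v - v^3/6) := by
    apply monotone_of_deriv_nonneg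
    · exact fun u => (h u).differentiableAt
    · intro u
      rw [(h u).deriv]
      have := Real.one_sub_sq_div_two_le_cos (x := u)
      linarith
  have h0 := mono ht
  simp only [Real.sin_zero] at h0
  norm_num at h0
  linarith

lemma exp_ge_sq {z : ℝ} (hz : 0 ≤ z) : (1+z/2)^2 ≤ Real.exp z := by
  have h := Real.add_one_le_exp (z/2)
  calc (1+z/2)^2 ≤ (Real.exp (z/2))^2 := by
        apply pow_le_pow_left₀ (by linarith) (by linarith)
    _ = Real.exp z := by rw [sq, ← Real.exp_add]; norm_num

lemma exp_neg_ge {z : ℝ} (h0 : 0 ≤ z) (h4 : z ≤ 4) : (1 - z/4)^4 ≤ Real.exp (-z) := by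
  have h := Real.add_one_le_exp (-(z/4))
  have h0' : (0:ℝ) ≤ 1 - z/4 := by linarith
  calc (1-z/4)^4 ≤ (Real.exp (-(z/4)))^4 := by
        apply pow_le_pow_left₀ h0' (by linarith)
    _ = Real.exp (-z) := by rw [← Real.exp_nat_mul]; ring_nf

lemma log_one_sub_ge {x : ℝ} (h0 : 0 ≤ x) (h1 : x ≤ 1/2) (n : ℕ) :
    -(∑ i ∈ Finset.range n, x ^ (i + 1) / (i + 1)) - 2 * x^(n+1) ≤ Real.log (1 - x) := by
  have habs : |x| < 1 := by rw [abs_of_nonneg h0]; linarith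
  have h := Real.abs_log_sub_add_sum_range_le habs n
  rw [abs_of_nonneg h0] at h
  have htail : x^(n+1)/(1-x) ≤ 2 * x^(n+1) := by
    rw [div_le_iff₀ (by linarith)]
    have : 0 ≤ x^(n+1) := pow_nonneg h0 _
    nlinarith
  have := abs_le.1 h
  linarith [this.1, this.2]

lemma log_one_sub_le {x : ℝ} (h0 : 0 ≤ x) (h1 : x ≤ 1/2) (n : ℕ) :
    Real.log (1 - x) ≤ -(∑ i ∈ Finset.range n, x ^ (i + 1) / (i + 1)) + 2 * x^(n+1) := by
  have habs : |x| < 1 := by rw [abs_of_nonneg h0]; linarith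
  have h := Real.abs_log_sub_add_sum_range_le habs n
  rw [abs_of_nonneg h0] at h
  have htail : x^(n+1)/(1-x) ≤ 2 * x^(n+1) := by
    rw [div_le_iff₀ (by linarith)]
    have : 0 ≤ x^(n+1) := pow_nonneg h0 _
    nlinarith
  have := abs_le.1 h
  linarith [this.1, this.2]

lemma log_one_add_ge {t : ℝ} (h0 : 0 ≤ t) (h1 : t ≤ 1/2) :
    t - t^2/2 + t^3/3 - t^4/4 - 2*t^5 ≤ Real.log (1+t) := by
  have habs : |(-t)| < 1 := by rw [abs_neg, abs_of_nonneg h0]; linarith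
  have h := Real.abs_log_sub_add_sum_range_le habs 4
  rw [abs_neg, abs_of_nonneg h0] at h
  have htail : t^5/(1-t) ≤ 2 * t^5 := by
    rw [div_le_iff₀ (by linarith)]
    have : 0 ≤ t^5 := pow_nonneg h0 _
    nlinarith
  have h2 := abs_le.1 h
  have hsum : (∑ i ∈ Finset.range 4, (-t) ^ (i + 1) / (i + 1)) = -t + t^2/2 - t^3/3 + t^4/4 := by
    simp [Finset.sum_range_succ]
    ring
  rw [hsum] at h2
  have hlog : Real.log (1 - -t) = Real.log (1+t) := by norm_num
  rw [hlog] at h2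
  linarith [h2.1, h2.2]

lemma logpi4_lb : (0.24155:ℝ) ≤ Real.log (4/π) := by
  have h4 : Real.log (4/π) = - Real.log (π/4) := by
    rw [← Real.log_inv, inv_div]
  have hπ : π < 3.141593 := Real.pi_lt_d6
  have hπ0 : (0:ℝ) < π := Real.pi_pos
  have h1 : Real.log (π/4) ≤ Real.log (1 - 0.21460175) := by
    apply Real.log_le_log (by positivity)
    norm_num
    linarith
  have h2 := log_one_sub_le (x := 0.21460175) (by norm_num) (by norm_num) 7
  have h3 : -(∑ i ∈ Finset.range 7, (0.21460175:ℝ) ^ (i + 1) / (i + 1))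
      + 2 * (0.21460175:ℝ)^8 ≤ -0.24155 := by
    simp only [Finset.sum_range_succ]
    norm_num
  rw [h4]
  linarith

lemma logpi4_ub : Real.log (4/π) ≤ 0.24158 := by
  have h4 : Real.log (4/π) = - Real.log (π/4) := by
    rw [← Real.log_inv, inv_div]
  have hπ : 3.141592 < π := Real.pi_gt_d6
  have h1 : Real.log (1 - 0.214602) ≤ Real.log (π/4) := by
    apply Real.log_le_log (by norm_num)
    linarith
  have h2 := log_one_sub_ge (x := 0.214602) (by norm_num) (by norm_num) 7
  have h3 : (-0.24158:ℝ) ≤ -(∑ i ∈ Finset.range 7, (0.214602:ℝ) ^ (i + 1) / (i + 1))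
      - 2 * (0.214602:ℝ)^8 := by
    simp only [Finset.sum_range_succ]
    norm_num
  rw [h4]
  linarith

lemma B_lb : (0.3484:ℝ) ≤ Real.log (4/π) / Real.log 2 := by
  have hA := logpi4_lb
  have hl2 : Real.log 2 < 0.6931471808 := Real.log_two_lt_d9
  have hl2' : (0:ℝ) < Real.log 2 := Real.log_pos one_lt_two
  rw [le_div_iff₀ hl2']
  nlinarith

lemma B_ub : Real.log (4/π) / Real.log 2 ≤ 0.3486 := by
  have hA := logpi4_ub
  have hl2 : (0.6931471803:ℝ) < Real.log 2 := Real.log_two_gt_d9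
  have hl2' : (0:ℝ) < Real.log 2 := Real.log_pos one_lt_two
  rw [div_le_iff₀ hl2']
  nlinarith

lemma poly1 (u : ℝ) (h0 : 0 ≤ u) (h1 : u ≤ 0.0484) :
    1 - 4*u ≤ (1 + 0.3484*((4*u) - (4*u)^2/2 + (4*u)^3/3 - (4*u)^4/4 - 2*(4*u)^5)/2)^2
      * (1 - 4.93485*u) := by
  have hple : ∀ n : ℕ, u^(n+1) ≤ 0.0484^n * u := by
    intro n
    calc u^(n+1) = u^n * u := by ring
      _ ≤ 0.0484^n * u := by
          apply mul_le_mul_of_nonneg_right (pow_le_pow_left₀ h0 h1 n) h0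
  nlinarith [hple 1, hple 3, hple 4, hple 7, hple 10, pow_nonneg h0 3, pow_nonneg h0 6,
    pow_nonneg h0 7, pow_nonneg h0 9, pow_nonneg h0 10]

lemma poly2 (s y Z : ℝ) (hy : y = 2*s - 2*s^2) (hZ : Z = 0.3486*(y + 0.71*y^2))
    (h0 : 0 ≤ s) (h1 : s ≤ 0.28) :
    4*s*(1-s) ≤ (1 - Z + 0.363*Z^2) * (4*s - 6.5798*s^3) := by
  subst hZ hy
  have hple : ∀ n : ℕ, s^(n+2) ≤ 0.28^n * s^2 := by
    intro n
    calc s^(n+2) = s^n * s^2 := by ring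
      _ ≤ 0.28^n * s^2 := by
          apply mul_le_mul_of_nonneg_right (pow_le_pow_left₀ h0 h1 n) (sq_nonneg s)
  nlinarith [hple 1, hple 3, hple 4, hple 6, hple 7, hple 9, pow_nonneg h0 4, pow_nonneg h0 7,
    pow_nonneg h0 10, sq_nonneg (s*(s - 0.30353)),
    mul_nonneg (mul_nonneg (mul_nonneg h0 h0) h0) (by linarith : (0:ℝ) ≤ 0.28 - s),
    mul_nonneg h0 (by linarith : (0:ℝ) ≤ 0.28 - s)]

set_option maxHeartbeats 1000000 in
lemma key_ineq (x : ℝ) (hx : 0 < x) (hx2 : x < 1/2) :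
    1 - 4*x^2 ≤ (1 + 4*x^2) ^ (Real.log (4/π) / Real.log 2) * Real.cos (π * x) := by
  have hπ6 : π < 3.141593 := Real.pi_lt_d6
  have hπ6' : 3.141592 < π := Real.pi_gt_d6
  have hπ0 : (0:ℝ) < π := Real.pi_pos
  have hpisq : π^2 ≤ 9.8697 := by nlinarith
  obtain ⟨B, hBdef⟩ : ∃ B : ℝ, B = Real.log (4/π) / Real.log 2 := ⟨_, rfl⟩
  rw [← hBdef]
  have hB0 : (0.3484:ℝ) ≤ B := hBdef ▸ B_lb
  have hB1 : B ≤ 0.3486 := hBdef ▸ B_ub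
  rcases le_or_gt x (11/50) with hxs | hxs
  · -- region 1 : 0 < x ≤ 0.22
    have hu1 : x^2 ≤ 0.0484 := by nlinarith
    have hu0 : (0:ℝ) ≤ x^2 := sq_nonneg x
    obtain ⟨t, htdef⟩ : ∃ t : ℝ, t = 4*x^2 := ⟨_, rfl⟩
    have ht1 : t ≤ 1/2 := by rw [htdef]; nlinarith
    have ht0 : (0:ℝ) ≤ t := by rw [htdef]; positivity
    obtain ⟨L, hLdef⟩ : ∃ L : ℝ, L = t - t^2/2 + t^3/3 - t^4/4 - 2*t^5 := ⟨_, rfl⟩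
    have hL : L ≤ Real.log (1+t) := hLdef ▸ log_one_add_ge ht0 ht1
    have hL0 : 0 ≤ L := by
      rw [hLdef]
      nlinarith [pow_nonneg ht0 2, pow_nonneg ht0 3, pow_nonneg ht0 4, pow_nonneg ht0 5]
    have hlogt : 0 ≤ Real.log (1+t) := Real.log_nonneg (by linarith)
    have hwB : 0.3484*L ≤ Real.log (1+t) * B := by
      nlinarith [mul_nonneg (by linarith : (0:ℝ) ≤ B - 0.3484) hlogt]
    have hw0 : 0 ≤ 0.3484*L := by linarith
    have h2 : (1 + 0.3484*L/2)^2 ≤ (1+t)^B := by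
      rw [Real.rpow_def_of_pos (by linarith : (0:ℝ) < 1+t)]
      calc (1 + 0.3484*L/2)^2 ≤ Real.exp (0.3484*L) := exp_ge_sq hw0
        _ ≤ Real.exp (Real.log (1+t) * B) := Real.exp_le_exp.2 hwB
    have hcos : 1 - 4.93485*x^2 ≤ Real.cos (π*x) := by
      have h := Real.one_sub_sq_div_two_le_cos (x := π*x)
      have hsq : (π*x)^2 ≤ 9.8697*x^2 := by
        calc (π*x)^2 = π^2*x^2 := by ring
          _ ≤ 9.8697*x^2 := mul_le_mul_of_nonneg_right hpisq hu0
      linarith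
    have hcos0 : (0:ℝ) ≤ 1 - 4.93485*x^2 := by nlinarith
    have hp := poly1 (x^2) hu0 hu1
    have hmul := mul_le_mul h2 hcos hcos0 (Real.rpow_nonneg (by linarith) B)
    have hLshape : (1 + 0.3484*((4*x^2) - (4*x^2)^2/2 + (4*x^2)^3/3 - (4*x^2)^4/4 - 2*(4*x^2)^5)/2)^2
        = (1 + 0.3484*L/2)^2 := by rw [hLdef, htdef]
    rw [hLshape] at hp
    calc 1 - 4*x^2 = 1 - 4*(x^2) := by ring
      _ ≤ (1 + 0.3484*L/2)^2 * (1 - 4.93485*(x^2)) := hp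
      _ = (1 + 0.3484*L/2)^2 * (1 - 4.93485*x^2) := by ring
      _ ≤ (1+t)^B * Real.cos (π*x) := hmul
      _ = (1 + 4*x^2)^B * Real.cos (π*x) := by rw [htdef]
  · -- region 2 : 0.22 < x < 1/2
    obtain ⟨s, hsdef⟩ : ∃ s : ℝ, s = 1/2 - x := ⟨_, rfl⟩
    have hs0 : 0 < s := by rw [hsdef]; linarith
    have hs1 : s ≤ 0.28 := by rw [hsdef]; linarith
    obtain ⟨y, hydef⟩ : ∃ y : ℝ, y = 2*s - 2*s^2 := ⟨_, rfl⟩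
    have hy0 : 0 ≤ y := by
      rw [hydef]
      nlinarith [mul_nonneg hs0.le (by linarith : (0:ℝ) ≤ 1 - s)]
    have hy1 : y ≤ 0.4032 := by
      rw [hydef]
      nlinarith [mul_nonneg (by linarith : (0:ℝ) ≤ 0.28 - s) (by linarith : (0:ℝ) ≤ 0.72 - s)]
    have h1y : (0:ℝ) < 1 - y := by linarith
    have hlog : -(y + 0.71*y^2) ≤ Real.log (1-y) := by
      have h := log_one_sub_ge hy0 (by linarith) 7
      have hple : ∀ n : ℕ, y^(n+2) ≤ 0.4032^n * y^2 := by
        intro n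
        calc y^(n+2) = y^n * y^2 := by ring
          _ ≤ 0.4032^n * y^2 := by
              apply mul_le_mul_of_nonneg_right (pow_le_pow_left₀ hy0 hy1 n) (sq_nonneg y)
      have hsum : -(y + 0.71*y^2) ≤
          -(∑ i ∈ Finset.range 7, y ^ (i + 1) / (i + 1)) - 2*y^8 := by
        simp only [Finset.sum_range_succ]
        push_cast
        nlinarith [hple 1, hple 2, hple 3, hple 4, hple 5, hple 6]
      linarith
    obtain ⟨Z, hZdef⟩ : ∃ Z : ℝ, Z = 0.3486*(y + 0.71*y^2) := ⟨_, rfl⟩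
    have hZ0 : 0 ≤ Z := by rw [hZdef]; nlinarith [sq_nonneg y]
    have hZup : Z ≤ 0.19 := by rw [hZdef]; nlinarith [sq_nonneg y]
    have hlogn : Real.log (1-y) ≤ 0 := Real.log_nonpos (by linarith) (by linarith)
    have hZlog : -Z ≤ Real.log (1-y) * B := by
      have hprod : 0 ≤ (0.3486 - B) * (-(Real.log (1-y))) :=
        mul_nonneg (by linarith) (by linarith)
      rw [hZdef]
      nlinarith
    have hdB : (1 - Z/4)^4 ≤ (1-y)^B := by
      rw [Real.rpow_def_of_pos h1y]
      calc (1 - Z/4)^4 ≤ Real.exp (-Z) := exp_neg_ge hZ0 (by linarith)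
        _ ≤ Real.exp (Real.log (1-y) * B) := Real.exp_le_exp.2 hZlog
    have h2B : (2:ℝ)^B = 4/π := by
      rw [Real.rpow_def_of_pos two_pos, hBdef,
        mul_div_cancel₀ _ (ne_of_gt (Real.log_pos one_lt_two)), Real.exp_log (by positivity)]
    have hbase : 1 + 4*x^2 = 2*(1-y) := by rw [hydef, hsdef]; ring
    have hsplit : (1 + 4*x^2)^B = (4/π) * (1-y)^B := by
      rw [hbase, Real.mul_rpow (by norm_num) (le_of_lt h1y), h2B]
    have hcossin : Real.cos (π*x) = Real.sin (π*s) := by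
      rw [show π*x = π/2 - π*s by rw [hsdef]; ring, Real.cos_pi_div_two_sub]
    have hsin : π*s - (π*s)^3/6 ≤ Real.sin (π*s) := my_sin_ge (by positivity)
    have hsl0 : 0 ≤ π*s - (π*s)^3/6 := by
      have hps0 : 0 ≤ π*s := by positivity
      have hps : π*s ≤ 0.88 := by nlinarith
      have hps2 : (π*s)^2 ≤ 0.7744 := by nlinarith
      nlinarith [mul_le_mul_of_nonneg_left hps2 hps0]
    have hP0 : (0:ℝ) ≤ (1 - Z/4)^4 := by positivity
    have hmul := mul_le_mul hdB hsin hsl0 (Real.rpow_nonneg (le_of_lt h1y) B)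
    have hRHS : 1 - 4*x^2 = 4*s*(1-s) := by rw [hsdef]; ring
    have hPlow : 1 - Z + 0.363*Z^2 ≤ (1 - Z/4)^4 := by nlinarith [sq_nonneg Z, pow_nonneg hZ0 3]
    have hfact : (4/π) * (π*s - (π*s)^3/6) = 4*s - (2/3)*π^2*s^3 := by
      field_simp
      ring
    have hs3 : (0:ℝ) ≤ s^3 := by positivity
    have hlin0 : (0:ℝ) ≤ 4*s - 6.5798*s^3 := by nlinarith
    have hp2 := poly2 s y Z hydef hZdef (le_of_lt hs0) hs1
    calc 1 - 4*x^2 = 4*s*(1-s) := hRHS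
      _ ≤ (1 - Z + 0.363*Z^2) * (4*s - 6.5798*s^3) := hp2
      _ ≤ (1 - Z/4)^4 * (4*s - 6.5798*s^3) := mul_le_mul_of_nonneg_right hPlow hlin0
      _ ≤ (1 - Z/4)^4 * (4*s - (2/3)*π^2*s^3) := by
          apply mul_le_mul_of_nonneg_left _ hP0
          nlinarith
      _ = (1 - Z/4)^4 * ((4/π) * (π*s - (π*s)^3/6)) := by rw [hfact]
      _ = (4/π) * ((1 - Z/4)^4 * (π*s - (π*s)^3/6)) := by ring
      _ ≤ (4/π) * ((1-y)^B * Real.sin (π*s)) := by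
          apply mul_le_mul_of_nonneg_left hmul (by positivity)
      _ = (1 + 4*x^2)^B * Real.cos (π*x) := by rw [hsplit, hcossin]; ring

theorem generalized_redheffer_equality_cases (α : ℝ) (h1 : 0 < α)
    (h2 : α < Real.log 2 / Real.log (4/π)) :
    (∀ x : ℝ, 0 < x → x < 1/2 →
      (1 + 4*x^2) ^ (1/α) * Real.cos (π * x) > 1 - 4*x^2) ∧
    (∀ x ∈ Set.Icc (0:ℝ) (1/2),
      ((1 + 4*x^2) ^ (1/α) * Real.cos (π * x) = 1 - 4*x^2 ↔ x = 0 ∨ x = 1/2)) := by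
  have hπ0 : (0:ℝ) < π := Real.pi_pos
  have hA : (0:ℝ) < Real.log (4/π) := Real.log_pos ((one_lt_div hπ0).2 Real.pi_lt_four)
  have hl2 : (0:ℝ) < Real.log 2 := Real.log_pos one_lt_two
  have hBlt : Real.log (4/π) / Real.log 2 < 1/α := by
    rw [div_lt_div_iff₀ hl2 h1]
    have := (lt_div_iff₀ hA).1 h2
    nlinarith
  have main : ∀ x : ℝ, 0 < x → x < 1/2 →
      (1 + 4*x^2) ^ (1/α) * Real.cos (π * x) > 1 - 4*x^2 := by
    intro x hx hx2
    have hkey := key_ineq x hx hx2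
    have hbase1 : (1:ℝ) < 1 + 4*x^2 := by nlinarith
    have hlt : (1 + 4*x^2) ^ (Real.log (4/π) / Real.log 2) < (1 + 4*x^2) ^ (1/α) :=
      (Real.rpow_lt_rpow_left_iff hbase1).2 hBlt
    have hcospos : 0 < Real.cos (π*x) := by
      apply Real.cos_pos_of_mem_Ioo
      constructor
      · nlinarith
      · nlinarith
    calc 1 - 4*x^2 ≤ (1 + 4*x^2) ^ (Real.log (4/π) / Real.log 2) * Real.cos (π*x) := hkey
      _ < (1 + 4*x^2) ^ (1/α) * Real.cos (π*x) := mul_lt_mul_of_pos_right hlt hcospos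
  constructor
  · exact main
  · rintro x ⟨hx0, hx1⟩
    constructor
    · intro heq
      by_contra hne
      push_neg at hne
      obtain ⟨hne0, hne1⟩ := hne
      have hx0' : 0 < x := lt_of_le_of_ne hx0 (Ne.symm hne0)
      have hx1' : x < 1/2 := lt_of_le_of_ne hx1 hne1
      have := main x hx0' hx1'
      linarith
    · rintro (rfl | rfl)
      · norm_num [Real.one_rpow]
      · rw [show π*((1:ℝ)/2) = π/2 by ring, Real.cos_pi_div_two]
        norm_num
end
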